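/- Monotonicity of the analysis covariance: if R > 0 and Q ≥ 0, then 0 ≤ A(Q) ≤ Q, where A(Q) = Q − Q H*(H Q H* + R)^{-1} H Q; consequently |A(Q)| ≤ |Q|. -/

import Mathlib

open ContinuousLinearMap RealInnerProductSpace

variable {V W : Type*} [NormedAddCommGroup V] [InnerProductSpace ℝ V] [CompleteSpace V]
  [NormedAddCommGroup W] [InnerProductSpace ℝ W] [CompleteSpace W]

/-- Auxiliary: a self-adjoint real operator whose quadratic form is bounded by `C ‖x‖²`
has norm at most `C`. -/
lemma aux_selfAdjoint_norm_le {K : V →L[ℝ] V} (hK : IsSelfAdjoint K) {C : ℝ} (hC : 0 ≤ C)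
    (h : ∀ x : V, |⟪K x, x⟫| ≤ C * ‖x‖ ^ 2) : ‖K‖ ≤ C := by
  have hsym : ∀ x y : V, ⟪K x, y⟫ = ⟪K y, x⟫ := by
    intro x y
    have := (isSelfAdjoint_iff_isSymmetric.mp hK) x y
    exact this.trans (real_inner_comm _ _)
  have key : ∀ x y : V, 4 * ⟪K x, y⟫ ≤ 2 * C * (‖x‖ ^ 2 + ‖y‖ ^ 2) := by
    intro x y
    have e1 : ⟪K (x + y), x + y⟫ - ⟪K (x - y), x - y⟫ = 4 * ⟪K x, y⟫ := by
      have h2 := hsym y x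
      simp only [map_add, map_sub, inner_add_left, inner_add_right, inner_sub_left,
        inner_sub_right]
      linarith
    have h1 := (abs_le.mp (h (x + y))).2
    have h2 := (abs_le.mp (h (x - y))).1
    have hpar : ‖x + y‖ ^ 2 + ‖x - y‖ ^ 2 = 2 * (‖x‖ ^ 2 + ‖y‖ ^ 2) := by
      have := parallelogram_law_with_norm ℝ x y
      nlinarith [this]
    nlinarith
  refine K.opNorm_le_bound hC fun x => ?_
  rcases eq_or_ne (K x) 0 with h0 | h0
  · simp only [h0, norm_zero]
    positivity
  · set y : V := (‖x‖ / ‖K x‖) • K x with hy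
    have hKx : (0 : ℝ) < ‖K x‖ := norm_pos_iff.mpr h0
    have hny : ‖y‖ = ‖x‖ := by
      rw [hy, norm_smul, Real.norm_eq_abs, abs_of_nonneg (by positivity), div_mul_cancel₀]
      exact hKx.ne'
    have hiy : ⟪K x, y⟫ = ‖x‖ * ‖K x‖ := by
      rw [hy, real_inner_smul_right, real_inner_self_eq_norm_sq]
      field_simp
    have := key x y
    rw [hiy, hny] at this
    have hx2 : ‖x‖ * ‖K x‖ ≤ C * ‖x‖ ^ 2 := by nlinarith
    rcases eq_or_lt_of_le (norm_nonneg x) with hx0 | hx0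
    · exfalso
      have : x = 0 := by rwa [eq_comm, norm_eq_zero] at hx0
      exact h0 (by simp [this])
    · have := (mul_le_mul_iff_right₀ hx0).mp (by nlinarith : ‖x‖ * ‖K x‖ ≤ ‖x‖ * (C * ‖x‖))
      linarith

/-- The analysis covariance map `A(Q) = Q − Q H* (H Q H* + R)⁻¹ H Q`. -/
noncomputable def analysisCov (H : V →L[ℝ] W) (R : W →L[ℝ] W) (Q : V →L[ℝ] V) : V →L[ℝ] V :=
  Q - (Q ∘L ContinuousLinearMap.adjoint H) ∘L
    Ring.inverse (H ∘L Q ∘L ContinuousLinearMap.adjoint H + R) ∘L (H ∘L Q)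

set_option maxHeartbeats 1000000

/-- If `R > 0` and `Q ≥ 0`, then `0 ≤ A(Q) ≤ Q` in the Loewner order, and
consequently `|A(Q)| ≤ |Q|`. -/
theorem analysisCov_monotone
    (H : V →L[ℝ] W) (R : W →L[ℝ] W) (Q : V →L[ℝ] V)
    (hQ : Q.IsPositive) (hRsym : IsSelfAdjoint R)
    (hRpos : ∃ α : ℝ, 0 < α ∧ ∀ u : W, α * ‖u‖ ^ 2 ≤ ⟪R u, u⟫) :
    (analysisCov H R Q).IsPositive ∧ (Q - analysisCov H R Q).IsPositive ∧
      ‖analysisCov H R Q‖ ≤ ‖Q‖ := by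
  obtain ⟨α, hα, hR⟩ := hRpos
  set S : W →L[ℝ] W := H ∘L Q ∘L ContinuousLinearMap.adjoint H + R with hSdef
  -- symmetry facts
  have hQsym : ∀ a b : V, ⟪Q a, b⟫ = ⟪a, Q b⟫ := hQ.1
  have hRsym' : ∀ a b : W, ⟪R a, b⟫ = ⟪a, R b⟫ := isSelfAdjoint_iff_isSymmetric.mp hRsym
  have hQnn : ∀ a : V, 0 ≤ ⟪Q a, a⟫ := by
    intro a
    have := hQ.2 a
    simpa [ContinuousLinearMap.reApplyInnerSelf] using this
  have hSsym : ∀ a b : W, ⟪S a, b⟫ = ⟪a, S b⟫ := by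
    intro a b
    simp only [hSdef, ContinuousLinearMap.add_apply, ContinuousLinearMap.comp_apply,
      inner_add_left, inner_add_right]
    rw [hRsym' a b]
    congr 1
    calc ⟪H (Q (ContinuousLinearMap.adjoint H a)), b⟫
        = ⟪Q (ContinuousLinearMap.adjoint H a), ContinuousLinearMap.adjoint H b⟫ := by
          rw [← ContinuousLinearMap.adjoint_inner_right H]
      _ = ⟪ContinuousLinearMap.adjoint H a, Q (ContinuousLinearMap.adjoint H b)⟫ := hQsym _ _
      _ = ⟪a, H (Q (ContinuousLinearMap.adjoint H b))⟫ := by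
          rw [ContinuousLinearMap.adjoint_inner_left H]
  -- coercivity of S
  have hScoer : ∀ u : W, α * ‖u‖ ^ 2 ≤ ⟪S u, u⟫ := by
    intro u
    have h1 : ⟪S u, u⟫ = ⟪Q (ContinuousLinearMap.adjoint H u), ContinuousLinearMap.adjoint H u⟫
        + ⟪R u, u⟫ := by
      simp only [hSdef, ContinuousLinearMap.add_apply, ContinuousLinearMap.comp_apply,
        inner_add_left]
      congr 1
      rw [← ContinuousLinearMap.adjoint_inner_right H]
    have := hQnn (ContinuousLinearMap.adjoint H u)
    have := hR u
    linarith
  -- invertibility of S via Lax-Milgram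
  set B : W →L[ℝ] W →L[ℝ] ℝ := (innerSL ℝ).comp S with hBdef
  have hBapp : ∀ a b : W, B a b = ⟪S a, b⟫ := fun a b => rfl
  have hB : IsCoercive B := by
    refine ⟨α, hα, fun u => ?_⟩
    rw [hBapp]
    calc α * ‖u‖ * ‖u‖ = α * ‖u‖ ^ 2 := by ring
      _ ≤ ⟪S u, u⟫ := hScoer u
  set e := hB.continuousLinearEquivOfBilin with he_def
  have he : ∀ v : W, e v = S v := by
    intro v
    apply ext_inner_right ℝ
    intro w
    rw [hB.continuousLinearEquivOfBilin_apply, hBapp]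
  set T : W →L[ℝ] W := (e.symm : W →L[ℝ] W) with hTdef
  have hST : ∀ w : W, S (T w) = w := by
    intro w
    rw [← he, hTdef]
    simp
  have hTS : ∀ w : W, T (S w) = w := by
    intro w
    rw [hTdef, ← he]
    simp
  clear_value T
  clear hTdef he he_def
  have h1 : S * T = 1 := by
    ext w
    simp [ContinuousLinearMap.mul_apply, hST]
  have h2 : T * S = 1 := by
    ext w
    simp [ContinuousLinearMap.mul_apply, hTS]
  have hRinv : Ring.inverse S = T := by
    have : S = ((⟨S, T, h1, h2⟩ : (W →L[ℝ] W)ˣ) : W →L[ℝ] W) := rfl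
    rw [this, Ring.inverse_unit]
    rfl
  -- properties of T
  have hTsym : ∀ a b : W, ⟪T a, b⟫ = ⟪a, T b⟫ := by
    intro a b
    calc ⟪T a, b⟫ = ⟪T a, S (T b)⟫ := by rw [hST]
      _ = ⟪S (T a), T b⟫ := (hSsym _ _).symm
      _ = ⟪a, T b⟫ := by rw [hST]
  have hTnn : ∀ w : W, 0 ≤ ⟪T w, w⟫ := by
    intro w
    have h3 : ⟪T w, w⟫ = ⟪S (T w), T w⟫ := by
      calc ⟪T w, w⟫ = ⟪w, T w⟫ := real_inner_comm _ _
        _ = ⟪S (T w), T w⟫ := by rw [hST]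
    rw [h3]
    have h4 := hScoer (T w)
    have h5 : 0 ≤ α * ‖T w‖ ^ 2 := by positivity
    linarith
  -- rewrite analysisCov
  have hA : analysisCov H R Q = Q - (Q ∘L ContinuousLinearMap.adjoint H) ∘L T ∘L (H ∘L Q) := by
    rw [analysisCov, ← hSdef, hRinv]
  set D : V →L[ℝ] V := (Q ∘L ContinuousLinearMap.adjoint H) ∘L T ∘L (H ∘L Q) with hDdef
  have hDapp : ∀ x : V, D x = Q (ContinuousLinearMap.adjoint H (T (H (Q x)))) := fun x => rfl
  have hDsym : ∀ a b : V, ⟪D a, b⟫ = ⟪a, D b⟫ := by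
    intro a b
    rw [hDapp, hDapp]
    calc ⟪Q (ContinuousLinearMap.adjoint H (T (H (Q a)))), b⟫
        = ⟪ContinuousLinearMap.adjoint H (T (H (Q a))), Q b⟫ := hQsym _ _
      _ = ⟪T (H (Q a)), H (Q b)⟫ := ContinuousLinearMap.adjoint_inner_left H _ _
      _ = ⟪H (Q a), T (H (Q b))⟫ := hTsym _ _
      _ = ⟪Q a, ContinuousLinearMap.adjoint H (T (H (Q b)))⟫ := by
          rw [← ContinuousLinearMap.adjoint_inner_right H]
      _ = ⟪a, Q (ContinuousLinearMap.adjoint H (T (H (Q b))))⟫ := hQsym _ _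
  have hDinner : ∀ x : V, ⟪D x, x⟫ = ⟪T (H (Q x)), H (Q x)⟫ := by
    intro x
    rw [hDapp]
    calc ⟪Q (ContinuousLinearMap.adjoint H (T (H (Q x)))), x⟫
        = ⟪ContinuousLinearMap.adjoint H (T (H (Q x))), Q x⟫ := hQsym _ _
      _ = ⟪T (H (Q x)), H (Q x)⟫ := ContinuousLinearMap.adjoint_inner_left H _ _
  have hDnn : ∀ x : V, 0 ≤ ⟪D x, x⟫ := fun x => (hDinner x) ▸ hTnn _
  -- quadratic form of A(Q)
  have hKey : ∀ x : V, ⟪(analysisCov H R Q) x, x⟫ = ⟪Q x, x⟫ - ⟪D x, x⟫ := by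
    intro x
    rw [hA]
    simp only [ContinuousLinearMap.sub_apply, inner_sub_left, ← hDdef]
  have hKnn : ∀ x : V, 0 ≤ ⟪(analysisCov H R Q) x, x⟫ := by
    intro x
    rw [hKey]
    set z : W := T (H (Q x)) with hz
    have hSz : S z = H (Q x) := hST _
    have hd : ⟪D x, x⟫ = ⟪z, S z⟫ := by rw [hDinner, ← hz, hSz]
    have hQxz : ⟪S z, z⟫ = ⟪Q x, ContinuousLinearMap.adjoint H z⟫ := by
      rw [hSz, ← ContinuousLinearMap.adjoint_inner_right H]
    have hSzz : ⟪S z, z⟫ = ⟪Q (ContinuousLinearMap.adjoint H z), ContinuousLinearMap.adjoint H z⟫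
        + ⟪R z, z⟫ := by
      simp only [hSdef, ContinuousLinearMap.add_apply, ContinuousLinearMap.comp_apply,
        inner_add_left]
      congr 1
      rw [← ContinuousLinearMap.adjoint_inner_right H]
    have hexp : ⟪Q (x - ContinuousLinearMap.adjoint H z), x - ContinuousLinearMap.adjoint H z⟫
        = ⟪Q x, x⟫ - 2 * ⟪Q x, ContinuousLinearMap.adjoint H z⟫
          + ⟪Q (ContinuousLinearMap.adjoint H z), ContinuousLinearMap.adjoint H z⟫ := by
      have hs := hQsym (ContinuousLinearMap.adjoint H z) x
      have hcomm : ⟪ContinuousLinearMap.adjoint H z, Q x⟫ = ⟪Q x, ContinuousLinearMap.adjoint H z⟫ :=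
        real_inner_comm _ _
      simp only [map_sub, inner_sub_left, inner_sub_right]
      linarith [hs, hcomm]
    have hQpos := hQnn (x - ContinuousLinearMap.adjoint H z)
    have hRz := hR z
    have hzSz : ⟪z, S z⟫ = ⟪S z, z⟫ := real_inner_comm _ _
    have hz2 : 0 ≤ α * ‖z‖ ^ 2 := by positivity
    linarith
  -- self-adjointness of A(Q)
  have hKsym : IsSelfAdjoint (analysisCov H R Q) := by
    rw [isSelfAdjoint_iff_isSymmetric]
    intro a b
    show ⟪(analysisCov H R Q) a, b⟫ = ⟪a, (analysisCov H R Q) b⟫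
    rw [hA]
    simp only [ContinuousLinearMap.sub_apply, inner_sub_left, inner_sub_right]
    rw [hQsym a b, hDsym a b]
  have hKpos : (analysisCov H R Q).IsPositive := by
    refine ⟨isSelfAdjoint_iff_isSymmetric.mp hKsym, fun x => ?_⟩
    simpa [ContinuousLinearMap.reApplyInnerSelf] using hKnn x
  have hQKpos : (Q - analysisCov H R Q).IsPositive := by
    have hQK : Q - analysisCov H R Q = D := by
      rw [hA]
      abel
    rw [hQK]
    refine ⟨(fun a b => hDsym a b), fun x => ?_⟩
    simpa [ContinuousLinearMap.reApplyInnerSelf] using hDnn x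
  refine ⟨hKpos, hQKpos, ?_⟩
  refine aux_selfAdjoint_norm_le hKsym (norm_nonneg Q) fun x => ?_
  rw [abs_of_nonneg (hKnn x), hKey]
  have h1 : ⟪Q x, x⟫ ≤ ‖Q‖ * ‖x‖ ^ 2 := by
    have h2 : ⟪Q x, x⟫ ≤ ‖Q x‖ * ‖x‖ := real_inner_le_norm _ _
    have h3 : ‖Q x‖ * ‖x‖ ≤ ‖Q‖ * ‖x‖ * ‖x‖ :=
      mul_le_mul_of_nonneg_right (Q.le_opNorm x) (norm_nonneg x)
    have h4 : ‖Q‖ * ‖x‖ * ‖x‖ = ‖Q‖ * ‖x‖ ^ 2 := by ring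
    linarith
  linarith [hDnn x]
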